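/- Let V be a finite set with n ≥ 1 elements, c ∈ (0,1), and let I : V → Finset V assign to each node a nonempty in-neighbor set. Define the operator T on functions f : V × V → ℝ by T(f)(u,u) = 1 and, for u ≠ v, T(f)(u,v) = (c/(|I(u)|·|I(v)|)) · ∑_{u'∈I(u)} ∑_{v'∈I(v)} f(u',v'). Then T is a contraction with Lipschitz constant c in the sup-norm on functions bounded by 1, and hence the SimRank equation s = T(s) has a unique solution, which takes values in [0,1]. -/

import Mathlib

open Finset

/-- The SimRank operator `T` is a `c`-contraction in the sup-norm on functions bounded by `1`,
and the SimRank equation `s = T s` has a unique solution, which takes values in `[0,1]`. -/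
theorem simrank_operator_contraction_and_unique_fixed_point
    {V : Type*} [Fintype V] [DecidableEq V] (n : ℕ) (hn : 1 ≤ n)
    (hcard : Fintype.card V = n)
    (c : ℝ) (hc0 : 0 < c) (hc1 : c < 1)
    (I : V → Finset V) (hI : ∀ v, (I v).Nonempty)
    (T : (V × V → ℝ) → (V × V → ℝ))
    (hT : ∀ f : V × V → ℝ, ∀ u v : V,
      T f (u, v) = if u = v then 1
        else (c / (((I u).card : ℝ) * ((I v).card : ℝ))) *
          ∑ u' ∈ I u, ∑ v' ∈ I v, f (u', v')) :
    (∀ f g : V × V → ℝ, (∀ q, |f q| ≤ 1) → (∀ q, |g q| ≤ 1) →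
      ∀ q : V × V, |T f q - T g q| ≤ c * ⨆ r : V × V, |f r - g r|) ∧
    (∃! s : V × V → ℝ, (∀ q, s q ∈ Set.Icc (0 : ℝ) 1) ∧ T s = s) := by
  have hV : Nonempty V := by
    have : 0 < Fintype.card V := by omega
    exact Fintype.card_pos_iff.mp this
  -- cardinality positivity
  have hIa : ∀ v : V, (0 : ℝ) < ((I v).card : ℝ) := fun v => by
    exact_mod_cast (hI v).card_pos
  -- core estimate
  have key : ∀ f g : V × V → ℝ, ∀ D : ℝ, 0 ≤ D → (∀ r, |f r - g r| ≤ D) →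
      ∀ q : V × V, |T f q - T g q| ≤ c * D := by
    intro f g D hD h q
    obtain ⟨u, v⟩ := q
    rw [hT f u v, hT g u v]
    by_cases huv : u = v
    · simp [huv, mul_nonneg hc0.le hD]
    · simp only [if_neg huv]
      rw [← mul_sub, ← Finset.sum_sub_distrib]
      have hab : (0 : ℝ) < ((I u).card : ℝ) * ((I v).card : ℝ) :=
        mul_pos (hIa u) (hIa v)
      rw [abs_mul, abs_of_nonneg (div_nonneg hc0.le hab.le)]
      have hsum : |∑ u' ∈ I u, (∑ v' ∈ I v, f (u', v') - ∑ v' ∈ I v, g (u', v'))|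
          ≤ ((I u).card : ℝ) * ((I v).card : ℝ) * D := by
        calc |∑ u' ∈ I u, (∑ v' ∈ I v, f (u', v') - ∑ v' ∈ I v, g (u', v'))|
            ≤ ∑ u' ∈ I u, |∑ v' ∈ I v, f (u', v') - ∑ v' ∈ I v, g (u', v')| :=
              Finset.abs_sum_le_sum_abs _ _
          _ ≤ ∑ u' ∈ I u, (((I v).card : ℝ) * D) := by
              refine Finset.sum_le_sum fun u' _ => ?_
              rw [← Finset.sum_sub_distrib]
              calc |∑ v' ∈ I v, (f (u', v') - g (u', v'))|
                  ≤ ∑ v' ∈ I v, |f (u', v') - g (u', v')| :=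
                    Finset.abs_sum_le_sum_abs _ _
                _ ≤ ∑ v' ∈ I v, D := Finset.sum_le_sum fun v' _ => h _
                _ = ((I v).card : ℝ) * D := by rw [Finset.sum_const, nsmul_eq_mul]
          _ = ((I u).card : ℝ) * (((I v).card : ℝ) * D) := by
              rw [Finset.sum_const, nsmul_eq_mul]
          _ = ((I u).card : ℝ) * ((I v).card : ℝ) * D := by ring
      calc c / (((I u).card : ℝ) * ((I v).card : ℝ)) *
            |∑ u' ∈ I u, (∑ v' ∈ I v, f (u', v') - ∑ v' ∈ I v, g (u', v'))|
          ≤ c / (((I u).card : ℝ) * ((I v).card : ℝ)) *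
            (((I u).card : ℝ) * ((I v).card : ℝ) * D) := by
            exact mul_le_mul_of_nonneg_left hsum (div_nonneg hc0.le hab.le)
        _ = c * D := by field_simp
  constructor
  · intro f g hf hg q
    have hbdd : BddAbove (Set.range fun r : V × V => |f r - g r|) := by
      refine ⟨2, ?_⟩
      rintro x ⟨r, rfl⟩
      calc |f r - g r| ≤ |f r| + |g r| := abs_sub _ _
        _ ≤ 2 := by linarith [hf r, hg r]
    have hD0 : 0 ≤ ⨆ r : V × V, |f r - g r| := by
      obtain ⟨r⟩ := (inferInstance : Nonempty V)
      exact le_trans (abs_nonneg _) (le_ciSup hbdd (r, r))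
    exact key f g _ hD0 (fun r => le_ciSup hbdd r) q
  · -- contraction on the whole space
    have hlip : LipschitzWith c.toNNReal T := by
      rw [lipschitzWith_iff_dist_le_mul]
      intro f g
      have h0 : (0 : ℝ) ≤ c.toNNReal * dist f g :=
        mul_nonneg (c.toNNReal).coe_nonneg dist_nonneg
      rw [dist_pi_le_iff h0]
      intro q
      rw [Real.dist_eq]
      have := key f g (dist f g) dist_nonneg
        (fun r => by rw [← Real.dist_eq]; exact dist_le_pi_dist f g r) q
      rwa [Real.coe_toNNReal c hc0.le]
    have hcontr : ContractingWith c.toNNReal T := by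
      constructor
      · rw [← NNReal.coe_lt_one, Real.coe_toNNReal c hc0.le]; exact hc1
      · exact hlip
    set s := ContractingWith.fixedPoint T hcontr with hs
    have hfix : T s = s := hcontr.fixedPoint_isFixedPt
    -- T maps [0,1]-valued functions to [0,1]-valued functions
    have hmap : ∀ f : V × V → ℝ, (∀ q, f q ∈ Set.Icc (0:ℝ) 1) →
        ∀ q, T f q ∈ Set.Icc (0:ℝ) 1 := by
      intro f hf q
      obtain ⟨u, v⟩ := q
      rw [hT f u v]
      by_cases huv : u = v
      · simp [huv]
      · simp only [if_neg huv]
        have hab : (0 : ℝ) < ((I u).card : ℝ) * ((I v).card : ℝ) :=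
          mul_pos (hIa u) (hIa v)
        constructor
        · refine mul_nonneg (div_nonneg hc0.le hab.le) ?_
          exact Finset.sum_nonneg fun u' _ =>
            Finset.sum_nonneg fun v' _ => (hf _).1
        · have hsum : ∑ u' ∈ I u, ∑ v' ∈ I v, f (u', v')
              ≤ ((I u).card : ℝ) * ((I v).card : ℝ) := by
            calc ∑ u' ∈ I u, ∑ v' ∈ I v, f (u', v')
                ≤ ∑ u' ∈ I u, ∑ v' ∈ I v, (1:ℝ) :=
                  Finset.sum_le_sum fun u' _ =>
                    Finset.sum_le_sum fun v' _ => (hf _).2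
              _ = ((I u).card : ℝ) * ((I v).card : ℝ) := by
                  simp [mul_comm]
          calc c / (((I u).card : ℝ) * ((I v).card : ℝ)) *
                ∑ u' ∈ I u, ∑ v' ∈ I v, f (u', v')
              ≤ c / (((I u).card : ℝ) * ((I v).card : ℝ)) *
                (((I u).card : ℝ) * ((I v).card : ℝ)) :=
                mul_le_mul_of_nonneg_left hsum (div_nonneg hc0.le hab.le)
            _ = c := by field_simp
            _ ≤ 1 := hc1.le
    -- s takes values in [0,1]: limit of iterates from 0
    have hsIcc : ∀ q, s q ∈ Set.Icc (0:ℝ) 1 := by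
      have htend := hcontr.tendsto_iterate_fixedPoint (fun _ : V × V => (0:ℝ))
      have hK : IsClosed {f : V × V → ℝ | ∀ q, f q ∈ Set.Icc (0:ℝ) 1} := by
        have : {f : V × V → ℝ | ∀ q, f q ∈ Set.Icc (0:ℝ) 1}
            = ⋂ q, (fun f : V × V → ℝ => f q) ⁻¹' Set.Icc (0:ℝ) 1 := by
          ext f; simp
        rw [this]
        exact isClosed_iInter fun q => isClosed_Icc.preimage (continuous_apply q)
      have hmem : ∀ m : ℕ, T^[m] (fun _ : V × V => (0:ℝ)) ∈
          {f : V × V → ℝ | ∀ q, f q ∈ Set.Icc (0:ℝ) 1} := by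
        intro m
        induction m with
        | zero => intro q; simp
        | succ m ih =>
          rw [Function.iterate_succ_apply']
          exact hmap _ ih
      exact hK.mem_of_tendsto htend (Filter.Eventually.of_forall hmem)
    refine ⟨s, ⟨hsIcc, hfix⟩, ?_⟩
    intro t ⟨_, ht⟩
    exact hcontr.fixedPoint_unique ht
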